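/- Let X₁, X₂ be independent standard normal random variables, α ∈ (0,1/2), and c = Φ⁻¹(1-α). Then as μ₂ → ∞, the probability P((0+X₁)·(μ₂+X₂) < 0 and |X₁| > c and |μ₂+X₂| > c) converges to α. Hence the supremum over the null hypothesis {μ₁μ₂ ≥ 0} of the rejection probability equals α. -/

import Mathlib

open MeasureTheory ProbabilityTheory

/-- The standard normal distribution on ℝ. -/
noncomputable def stdGauss : Measure ℝ := gaussianReal 0 1

/-- Φ, the standard normal CDF. -/
noncomputable def Φ : ℝ → ℝ := fun x => cdf stdGauss x

open Real Set


noncomputable abbrev φ0 : ℝ → ℝ := gaussianPDFReal 0 1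

instance : IsProbabilityMeasure stdGauss := by unfold stdGauss; infer_instance
instance : NullSingletonClass stdGauss := by
  constructor
  intro x
  show gaussianReal 0 1 {x} = 0
  exact (gaussianReal_absolutelyContinuous 0 one_ne_zero) (measure_singleton x)

lemma Φ_eq_integral (x : ℝ) : Φ x = ∫ t in Iic x, φ0 t := by
  rw [Φ, cdf_eq_real, measureReal_def, stdGauss, gaussianReal_apply_eq_integral 0 one_ne_zero,
    ENNReal.toReal_ofReal]
  exact setIntegral_nonneg measurableSet_Iic fun t _ => gaussianPDFReal_nonneg _ _ _

lemma Φ_nonneg (x : ℝ) : 0 ≤ Φ x := by rw [Φ, cdf_eq_real, measureReal_def]; positivity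

lemma Φ_le_one (x : ℝ) : Φ x ≤ 1 := by
  rw [Φ, cdf_eq_real, measureReal_def]
  exact ENNReal.toReal_le_of_le_ofReal zero_le_one (by simpa using prob_le_one)

lemma stdGauss_Iic (x : ℝ) : stdGauss (Iic x) = ENNReal.ofReal (Φ x) := by
  rw [Φ, cdf_eq_real, measureReal_def, ENNReal.ofReal_toReal (measure_ne_top _ _)]

lemma stdGauss_Iio (x : ℝ) : stdGauss (Iio x) = ENNReal.ofReal (Φ x) := by
  rw [← stdGauss_Iic]; exact measure_congr (Iio_ae_eq_Iic)

lemma stdGauss_Ioi (x : ℝ) : stdGauss (Ioi x) = ENNReal.ofReal (1 - Φ x) := by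
  have h1 : stdGauss (Iic x) + stdGauss (Ioi x) = 1 := by
    rw [← measure_union (by simp [disjoint_left]) measurableSet_Ioi, Iic_union_Ioi]
    exact measure_univ
  rw [stdGauss_Iic] at h1
  have h2 : stdGauss (Ioi x) = 1 - ENNReal.ofReal (Φ x) := by
    rw [← h1]; exact (ENNReal.add_sub_cancel_left (by simp)).symm
  rw [h2, ← ENNReal.ofReal_one, ← ENNReal.ofReal_sub _ (Φ_nonneg x)]

lemma φ0_even (t : ℝ) : φ0 (-t) = φ0 t := by
  simp [gaussianPDFReal, neg_sq]

lemma Φ_neg (x : ℝ) : Φ (-x) = 1 - Φ x := by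
  have h1 : (1:ℝ) = ∫ t, φ0 t := (integral_gaussianPDFReal_eq_one 0 one_ne_zero).symm
  have hsplit : ∫ t, φ0 t = (∫ t in Iic x, φ0 t) + ∫ t in Ioi x, φ0 t := by
    rw [← setIntegral_union (Iic_disjoint_Ioi le_rfl) measurableSet_Ioi
      (integrable_gaussianPDFReal 0 1).restrict (integrable_gaussianPDFReal 0 1).restrict,
      Iic_union_Ioi, setIntegral_univ]
  have h2 : Φ (-x) = ∫ t in Ioi x, φ0 t := by
    rw [Φ_eq_integral]
    calc ∫ t in Iic (-x), φ0 t = ∫ t in Iic (-x), φ0 (-t) := by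
          exact setIntegral_congr_fun measurableSet_Iic fun t _ => (φ0_even t).symm
      _ = ∫ t in Ioi x, φ0 t := by rw [integral_comp_neg_Iic]; norm_num
  rw [h2, Φ_eq_integral]
  rw [hsplit] at h1
  linarith

lemma φ0_shift (d t : ℝ) : φ0 (t - d) = gaussianPDFReal d 1 t := by
  rw [show φ0 (t - d) = gaussianPDFReal 0 1 (t - d) from rfl, gaussianPDFReal_sub, zero_add]

lemma Φ_shift_Iic (d x : ℝ) : ∫ t in Iic x, φ0 (t - d) = Φ (x - d) := by
  rw [Φ_eq_integral]
  have : ∀ t : ℝ, (Iic (x - d)).indicator φ0 (t - d) = (Iic x).indicator (fun t => φ0 (t - d)) t := by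
    intro t
    by_cases h : t ≤ x
    · rw [indicator_of_mem (by simpa using h), indicator_of_mem (by simpa [sub_le_sub_iff_right] using h)]
    · rw [indicator_of_notMem (by simpa using h), indicator_of_notMem (by simp [sub_le_sub_iff_right]; simpa using h)]
  rw [← integral_indicator measurableSet_Iic, ← integral_indicator measurableSet_Iic]
  rw [← funext this]
  exact (integral_sub_right_eq_self ((Iic (x-d)).indicator φ0) d)

lemma pdf_ineq {d s t : ℝ} (hd : 0 ≤ d) (hst : s ≤ t) :
    φ0 (s - d) * φ0 t ≤ φ0 s * φ0 (t - d) := by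
  simp only [gaussianPDFReal, sub_zero, NNReal.coe_one, mul_one]
  rw [mul_mul_mul_comm ((√(2*π))⁻¹) (rexp (-s^2/2))]
  have hK : (0:ℝ) ≤ (√(2*π))⁻¹ * (√(2*π))⁻¹ := by positivity
  have h : rexp (-(s-d)^2/2) * rexp (-t^2/2) ≤
      rexp (-s^2/2) * rexp (-(t-d)^2/2) := by
    rw [← Real.exp_add, ← Real.exp_add, Real.exp_le_exp]
    nlinarith [mul_le_mul_of_nonneg_right hst hd]
  calc (√(2*π))⁻¹ * rexp (-(s-d)^2/2) * ((√(2*π))⁻¹ * rexp (-t^2/2))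
      = (√(2*π))⁻¹ * (√(2*π))⁻¹ * (rexp (-(s-d)^2/2) * rexp (-t^2/2)) := by ring
    _ ≤ _ := mul_le_mul_of_nonneg_left h hK

lemma integral_Ioc_phi {x y : ℝ} (hxy : x ≤ y) (f : ℝ → ℝ) (hf : Integrable f) :
    ∫ t in Ioc x y, f t = (∫ t in Iic y, f t) - ∫ t in Iic x, f t := by
  have : ∫ t in Iic y, f t = (∫ t in Iic x, f t) + ∫ t in Ioc x y, f t := by
    rw [← setIntegral_union (Iic_disjoint_Ioc le_rfl) measurableSet_Ioc hf.restrict hf.restrict,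
      Iic_union_Ioc_eq_Iic hxy]
  linarith

lemma Φ_ratio {d x y : ℝ} (hd : 0 ≤ d) (hxy : x ≤ y) :
    Φ (x - d) * Φ y ≤ Φ (y - d) * Φ x := by
  have hI : Integrable φ0 := integrable_gaussianPDFReal 0 1
  have hId : Integrable (fun t => φ0 (t - d)) := by
    simp only [φ0_shift]; exact integrable_gaussianPDFReal d 1
  set C := ∫ t in Ioc x y, φ0 t with hC
  set D := ∫ t in Ioc x y, φ0 (t - d) with hD
  have hCval : C = Φ y - Φ x := by
    rw [hC, integral_Ioc_phi hxy _ hI, Φ_eq_integral, Φ_eq_integral]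
  have hDval : D = Φ (y - d) - Φ (x - d) := by
    rw [hD, integral_Ioc_phi hxy _ hId, Φ_shift_Iic, Φ_shift_Iic]
  have hstep : ∀ s ∈ Iic x, φ0 (s - d) * C ≤ φ0 s * D := by
    intro s hs
    rw [hC, hD, ← integral_const_mul, ← integral_const_mul]
    apply setIntegral_mono_on
    · exact hI.restrict.const_mul _
    · exact hId.restrict.const_mul _
    · exact measurableSet_Ioc
    · intro t ht
      exact pdf_ineq hd (le_trans hs (le_of_lt ht.1))
  have hmain : (∫ s in Iic x, φ0 (s - d) * C) ≤ ∫ s in Iic x, φ0 s * D :=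
    setIntegral_mono_on (hId.restrict.mul_const _) (hI.restrict.mul_const _)
      measurableSet_Iic hstep
  rw [integral_mul_const, integral_mul_const, Φ_shift_Iic, ← Φ_eq_integral] at hmain
  rw [hCval, hDval] at hmain
  nlinarith [hmain]

lemma Φ_mono : Monotone Φ := monotone_cdf _

lemma Φ_zero : Φ 0 = 1/2 := by
  have h := Φ_neg 0; rw [neg_zero] at h; linarith

lemma c_pos {α c : ℝ} (hα : α ∈ Ioo (0:ℝ) (1/2)) (hc : Φ c = 1 - α) : 0 < c := by
  obtain ⟨hα0, hα2⟩ := hα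
  by_contra h
  push_neg at h
  have := Φ_mono h
  rw [hc, Φ_zero] at this
  linarith

lemma core {α c : ℝ} (hα : α ∈ Ioo (0:ℝ) (1/2)) (hc : Φ c = 1 - α) {μ₁ μ₂ : ℝ}
    (h1 : 0 ≤ μ₁) (h2 : 0 ≤ μ₂) :
    Φ (-c - μ₁) * (1 - Φ (c - μ₂)) + (1 - Φ (c - μ₁)) * Φ (-c - μ₂) ≤ α := by
  obtain ⟨hα0, hα2⟩ := hα
  have hc0 : 0 < c := c_pos ⟨hα0, hα2⟩ hc
  have hΦnc : Φ (-c) = α := by rw [Φ_neg, hc]; ring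
  -- key inequality from log-concavity-type ratio bound
  have key : ∀ μ : ℝ, 0 ≤ μ → Φ (-c - μ) * (1 - α) ≤ α * Φ (c - μ) := by
    intro μ hμ
    have h := Φ_ratio (d := 2*c) (x := c - μ) (y := c) (by linarith) (by linarith)
    have e1 : c - μ - 2*c = -c - μ := by ring
    have e2 : c - 2*c = -c := by ring
    rw [e1, e2, hc, hΦnc] at h
    linarith
  have k1' := key μ₁ h1
  have k2' := key μ₂ h2
  -- abbreviations
  set f₁ := Φ (-c - μ₁) with hf₁
  set f₂ := Φ (-c - μ₂) with hf₂
  set g₁ := 1 - Φ (c - μ₁) with hg₁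
  set g₂ := 1 - Φ (c - μ₂) with hg₂
  have e1 : 1 - g₁ = Φ (c - μ₁) := by rw [hg₁]; ring
  have k1 : f₁ * (1 - α) ≤ α * (1 - g₁) := by rw [e1]; exact k1'
  have e2 : 1 - g₂ = Φ (c - μ₂) := by rw [hg₂]; ring
  have k2 : f₂ * (1 - α) ≤ α * (1 - g₂) := by rw [e2]; exact k2'
  have hg₁α : α ≤ g₁ := by
    have : Φ (-(c - μ₁)) = 1 - Φ (c - μ₁) := Φ_neg _
    have hm : Φ (-c) ≤ Φ (-(c-μ₁)) := Φ_mono (by linarith)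
    rw [hΦnc] at hm; linarith
  have hg₂α : α ≤ g₂ := by
    have : Φ (-(c - μ₂)) = 1 - Φ (c - μ₂) := Φ_neg _
    have hm : Φ (-c) ≤ Φ (-(c-μ₂)) := Φ_mono (by linarith)
    rw [hΦnc] at hm; linarith
  have hg₁1 : g₁ ≤ 1 := by have := Φ_nonneg (c - μ₁); linarith
  have hg₂1 : g₂ ≤ 1 := by have := Φ_nonneg (c - μ₂); linarith
  have hf₁0 : 0 ≤ f₁ := Φ_nonneg _
  have hf₂0 : 0 ≤ f₂ := Φ_nonneg _
  have hg₂0 : 0 ≤ g₂ := by linarith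
  have hg₁0 : 0 ≤ g₁ := by linarith
  -- bilinear bound : (1-g₁)*g₂ + g₁*(1-g₂) ≤ 1 - α
  have bil : (1 - g₁) * g₂ + g₁ * (1 - g₂) ≤ 1 - α := by
    rcases le_or_gt g₁ (1/2) with h | h
    · nlinarith [mul_nonneg (by linarith : (0:ℝ) ≤ 1 - 2*g₁) (by linarith : (0:ℝ) ≤ 1 - g₂)]
    · nlinarith [mul_nonneg (by linarith : (0:ℝ) ≤ 2*g₁ - 1) (by linarith : (0:ℝ) ≤ g₂ - α)]
  -- combine : (f₁ g₂ + g₁ f₂)(1-α) ≤ α ((1-g₁)g₂ + g₁(1-g₂)) ≤ α(1-α)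
  have comb : (f₁ * g₂ + g₁ * f₂) * (1 - α) ≤ α * (1 - α) := by
    have t1 : f₁ * (1 - α) * g₂ ≤ α * (1 - g₁) * g₂ := by nlinarith
    have t2 : f₂ * (1 - α) * g₁ ≤ α * (1 - g₂) * g₁ := by nlinarith
    nlinarith
  have h1α : (0:ℝ) < 1 - α := by linarith
  nlinarith [comb]


/-- The joint law of two independent standard normals. -/
noncomputable def P2 : Measure (ℝ × ℝ) := stdGauss.prod stdGauss


lemma rej_set_eq {c : ℝ} (hc0 : 0 < c) (μ₁ μ₂ : ℝ) :
    {p : ℝ × ℝ | (μ₁ + p.1) * (μ₂ + p.2) < 0 ∧ c < |μ₁ + p.1| ∧ c < |μ₂ + p.2|} =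
    (Iio (-c - μ₁) ×ˢ Ioi (c - μ₂)) ∪ (Ioi (c - μ₁) ×ˢ Iio (-c - μ₂)) := by
  ext p
  simp only [mem_setOf_eq, mem_union, mem_prod, mem_Iio, mem_Ioi]
  constructor
  · rintro ⟨hprod, h1, h2⟩
    rcases lt_abs.mp h1 with ha | ha <;> rcases lt_abs.mp h2 with hb | hb
    · exact absurd hprod (by nlinarith)
    · right; constructor <;> linarith
    · left; constructor <;> linarith
    · exact absurd hprod (by nlinarith)
  · rintro (⟨ha, hb⟩ | ⟨ha, hb⟩)
    · exact ⟨mul_neg_of_neg_of_pos (by linarith) (by linarith),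
        lt_abs.mpr (Or.inr (by linarith)), lt_abs.mpr (Or.inl (by linarith))⟩
    · exact ⟨mul_neg_of_pos_of_neg (by linarith) (by linarith),
        lt_abs.mpr (Or.inl (by linarith)), lt_abs.mpr (Or.inr (by linarith))⟩

lemma P2_apply {c : ℝ} (hc0 : 0 < c) (μ₁ μ₂ : ℝ) :
    P2 {p : ℝ × ℝ | (μ₁ + p.1) * (μ₂ + p.2) < 0 ∧ c < |μ₁ + p.1| ∧ c < |μ₂ + p.2|} =
    ENNReal.ofReal (Φ (-c - μ₁) * (1 - Φ (c - μ₂))) +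
      ENNReal.ofReal ((1 - Φ (c - μ₁)) * Φ (-c - μ₂)) := by
  rw [rej_set_eq hc0]
  have hdisj : Disjoint (Iio (-c - μ₁) ×ˢ Ioi (c - μ₂)) (Ioi (c - μ₁) ×ˢ Iio (-c - μ₂)) := by
    rw [disjoint_left]
    rintro p ⟨hp1, _⟩ ⟨hq1, _⟩
    simp only [mem_Iio] at hp1
    simp only [mem_Ioi] at hq1
    linarith
  rw [measure_union hdisj (measurableSet_Ioi.prod measurableSet_Iio)]
  show stdGauss.prod stdGauss _ + stdGauss.prod stdGauss _ = _
  rw [Measure.prod_prod, Measure.prod_prod, stdGauss_Iio, stdGauss_Ioi, stdGauss_Ioi,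
    stdGauss_Iio, ← ENNReal.ofReal_mul (Φ_nonneg _), ← ENNReal.ofReal_mul (by linarith [Φ_le_one (c - μ₁)])]

lemma one_sub_Φ_nonneg (x : ℝ) : 0 ≤ 1 - Φ x := by linarith [Φ_le_one x]

lemma P2_toReal {c : ℝ} (hc0 : 0 < c) (μ₁ μ₂ : ℝ) :
    (P2 {p : ℝ × ℝ | (μ₁ + p.1) * (μ₂ + p.2) < 0 ∧ c < |μ₁ + p.1| ∧ c < |μ₂ + p.2|}).toReal =
    Φ (-c - μ₁) * (1 - Φ (c - μ₂)) + (1 - Φ (c - μ₁)) * Φ (-c - μ₂) := by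
  rw [P2_apply hc0, ENNReal.toReal_add ENNReal.ofReal_ne_top ENNReal.ofReal_ne_top,
    ENNReal.toReal_ofReal (mul_nonneg (Φ_nonneg _) (one_sub_Φ_nonneg _)),
    ENNReal.toReal_ofReal (mul_nonneg (one_sub_Φ_nonneg _) (Φ_nonneg _))]

lemma tendsto_formula {α c : ℝ} (hα : α ∈ Ioo (0:ℝ) (1/2)) (hc : Φ c = 1 - α) :
    Filter.Tendsto (fun t : ℝ => Φ (-c - 0) * (1 - Φ (c - t)) + (1 - Φ (c - 0)) * Φ (-c - t))
      Filter.atTop (nhds α) := by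
  have hb1 : Filter.Tendsto (fun t : ℝ => c - t) Filter.atTop Filter.atBot := by
    exact (Filter.tendsto_atBot_add_const_left Filter.atTop c (f := fun t : ℝ => -t) Filter.tendsto_neg_atTop_atBot).congr fun t => by ring
  have hb2 : Filter.Tendsto (fun t : ℝ => -c - t) Filter.atTop Filter.atBot := by
    exact (Filter.tendsto_atBot_add_const_left Filter.atTop (-c) (f := fun t : ℝ => -t) Filter.tendsto_neg_atTop_atBot).congr fun t => by ring
  have hΦ1 : Filter.Tendsto (fun t : ℝ => Φ (c - t)) Filter.atTop (nhds 0) :=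
    (tendsto_cdf_atBot stdGauss).comp hb1
  have hΦ2 : Filter.Tendsto (fun t : ℝ => Φ (-c - t)) Filter.atTop (nhds 0) :=
    (tendsto_cdf_atBot stdGauss).comp hb2
  have hlim := ((tendsto_const_nhds (x := Φ (-c - 0))).mul
      ((tendsto_const_nhds (x := (1:ℝ))).sub hΦ1)).add
      ((tendsto_const_nhds (x := 1 - Φ (c - 0))).mul hΦ2)
  have hval : Φ (-c - 0) * (1 - 0) + (1 - Φ (c - 0)) * 0 = α := by
    rw [sub_zero, sub_zero, Φ_neg, hc]; ring
  rwa [hval] at hlim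

lemma core_neg {α c : ℝ} (hα : α ∈ Ioo (0:ℝ) (1/2)) (hc : Φ c = 1 - α) {μ₁ μ₂ : ℝ}
    (h1 : μ₁ ≤ 0) (h2 : μ₂ ≤ 0) :
    Φ (-c - μ₁) * (1 - Φ (c - μ₂)) + (1 - Φ (c - μ₁)) * Φ (-c - μ₂) ≤ α := by
  have h := core hα hc (μ₁ := -μ₁) (μ₂ := -μ₂) (by linarith) (by linarith)
  have A : Φ (-c - -μ₁) = 1 - Φ (c - μ₁) := by
    rw [show -c - -μ₁ = -(c - μ₁) by ring, Φ_neg]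
  have B : 1 - Φ (c - -μ₂) = Φ (-c - μ₂) := by
    rw [show c - -μ₂ = -(-c - μ₂) by ring, Φ_neg]; ring
  have C : 1 - Φ (c - -μ₁) = Φ (-c - μ₁) := by
    rw [show c - -μ₁ = -(-c - μ₁) by ring, Φ_neg]; ring
  have D : Φ (-c - -μ₂) = 1 - Φ (c - μ₂) := by
    rw [show -c - -μ₂ = -(c - μ₂) by ring, Φ_neg]
  rw [A, B, C, D] at h
  linarith

/-- Nonconservativeness: along μ₁ = 0, μ₂ → ∞ the rejection probability tends to α,
and the supremum of the rejection probability over the null equals α. -/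
theorem stmt1 (α c : ℝ) (hα : α ∈ Set.Ioo (0:ℝ) (1/2)) (hc : Φ c = 1 - α) :
    Filter.Tendsto (fun μ₂ : ℝ =>
      (P2 {p : ℝ × ℝ | (0 + p.1) * (μ₂ + p.2) < 0 ∧ c < |p.1| ∧ c < |μ₂ + p.2|}).toReal)
      Filter.atTop (nhds α)
    ∧ (⨆ μ : ℝ × ℝ, ⨆ _ : μ.1 * μ.2 ≥ 0,
        P2 {p : ℝ × ℝ | (μ.1 + p.1) * (μ.2 + p.2) < 0 ∧ c < |μ.1 + p.1| ∧ c < |μ.2 + p.2|})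
      = ENNReal.ofReal α := by
  have hc0 : 0 < c := c_pos hα hc
  have hset : ∀ μ₂ : ℝ,
      {p : ℝ × ℝ | (0 + p.1) * (μ₂ + p.2) < 0 ∧ c < |p.1| ∧ c < |μ₂ + p.2|} =
      {p : ℝ × ℝ | ((0:ℝ) + p.1) * (μ₂ + p.2) < 0 ∧ c < |(0:ℝ) + p.1| ∧ c < |μ₂ + p.2|} := by
    intro μ₂; ext p; simp only [mem_setOf_eq, zero_add]
  have htR : ∀ μ₂ : ℝ,
      (P2 {p : ℝ × ℝ | (0 + p.1) * (μ₂ + p.2) < 0 ∧ c < |p.1| ∧ c < |μ₂ + p.2|}).toReal =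
      Φ (-c - 0) * (1 - Φ (c - μ₂)) + (1 - Φ (c - 0)) * Φ (-c - μ₂) := by
    intro μ₂; rw [hset μ₂, P2_toReal hc0 0 μ₂]
  have part1 : Filter.Tendsto (fun μ₂ : ℝ =>
      (P2 {p : ℝ × ℝ | (0 + p.1) * (μ₂ + p.2) < 0 ∧ c < |p.1| ∧ c < |μ₂ + p.2|}).toReal)
      Filter.atTop (nhds α) := by
    have := tendsto_formula hα hc
    exact this.congr (fun μ₂ => (htR μ₂).symm)
  refine ⟨part1, le_antisymm ?_ ?_⟩
  · refine iSup_le fun μ => iSup_le fun hμ => ?_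
    rw [P2_apply hc0 μ.1 μ.2,
      ← ENNReal.ofReal_add (mul_nonneg (Φ_nonneg _) (one_sub_Φ_nonneg _))
        (mul_nonneg (one_sub_Φ_nonneg _) (Φ_nonneg _))]
    apply ENNReal.ofReal_le_ofReal
    rcases le_or_gt 0 μ.1 with h1 | h1
    · rcases le_or_gt 0 μ.2 with h2 | h2
      · exact core hα hc h1 h2
      · have hμ1 : μ.1 ≤ 0 := by nlinarith [hμ]
        exact core_neg hα hc hμ1 (le_of_lt h2)
    · have hμ2 : μ.2 ≤ 0 := by nlinarith [hμ]
      exact core_neg hα hc (le_of_lt h1) hμ2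
  · have hofm : ∀ t : ℝ,
        P2 {p : ℝ × ℝ | ((0:ℝ) + p.1) * (t + p.2) < 0 ∧ c < |(0:ℝ) + p.1| ∧ c < |t + p.2|} =
        ENNReal.ofReal (Φ (-c - 0) * (1 - Φ (c - t)) + (1 - Φ (c - 0)) * Φ (-c - t)) := by
      intro t
      rw [P2_apply hc0 0 t,
        ← ENNReal.ofReal_add (mul_nonneg (Φ_nonneg _) (one_sub_Φ_nonneg _))
          (mul_nonneg (one_sub_Φ_nonneg _) (Φ_nonneg _))]
    have hlim : Filter.Tendsto (fun t : ℝ =>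
        P2 {p : ℝ × ℝ | ((0:ℝ) + p.1) * (t + p.2) < 0 ∧ c < |(0:ℝ) + p.1| ∧ c < |t + p.2|})
        Filter.atTop (nhds (ENNReal.ofReal α)) := by
      have := ENNReal.continuous_ofReal.continuousAt.tendsto.comp (tendsto_formula hα hc)
      exact Filter.Tendsto.congr (fun t => (hofm t).symm) this
    refine le_of_tendsto' hlim fun t => ?_
    exact le_iSup₂ (f := fun (μ : ℝ × ℝ) (_ : μ.1 * μ.2 ≥ 0) =>
      P2 {p : ℝ × ℝ | (μ.1 + p.1) * (μ.2 + p.2) < 0 ∧ c < |μ.1 + p.1| ∧ c < |μ.2 + p.2|})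
      ((0:ℝ), t) (by simp)
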